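/- Let v_1,...,v_r ∈ ℤ^n be linearly independent and let Λ = {x ∈ ℤ^n : x·v_1 = ... = x·v_r = 0}. Let D be the largest positive integer such that every r×r minor of the n×r matrix with columns v_1,...,v_r is divisible by D, and let W be the Euclidean norm of the vector of all r×r minors (the exterior product). Then det(Λ) = W / D. -/

import Mathlib

open Matrix Finset

private lemma orderIsoOfFin_congr {α : Type*} [LinearOrder α] {m : ℕ} {s₁ s₂ : Finset α}
    (h : s₁ = s₂) (h₁ : s₁.card = m) (h₂ : s₂.card = m) (i : Fin m) :
    (s₁.orderIsoOfFin h₁ i : α) = (s₂.orderIsoOfFin h₂ i : α) := by subst h; rfl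

private lemma image_orderIsoOfFin {α : Type*} [LinearOrder α] [DecidableEq α] {m : ℕ}
    (s : Finset α) (h : s.card = m) :
    Finset.image (fun i => (s.orderIsoOfFin h i : α)) Finset.univ = s := by
  apply Finset.eq_of_subset_of_card_le
  · intro a ha
    simp only [Finset.mem_image] at ha
    obtain ⟨i, _, rfl⟩ := ha
    exact (s.orderIsoOfFin h i).2
  · rw [Finset.card_image_of_injective _ (fun i j hij =>
      (s.orderIsoOfFin h).injective (Subtype.ext hij)), Finset.card_univ,
      Fintype.card_fin, h]

private theorem cauchy_binet {R : Type*} [CommRing R] {m N : ℕ}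
    (A : Matrix (Fin m) (Fin N) R) (B : Matrix (Fin N) (Fin m) R) :
    (A * B).det = ∑ s : {s : Finset (Fin N) // s.card = m},
      (Matrix.of fun i j : Fin m => A i (s.1.orderIsoOfFin s.2 j)).det *
      (Matrix.of fun i j : Fin m => B (s.1.orderIsoOfFin s.2 i) j).det := by
  classical
  set F := (Matrix.detRowAlternating (R := R) (n := Fin m)).toMultilinearMap with hFdef
  have h1 : (A * B).det
      = ∑ f : Fin m → Fin N, (∏ i, A i (f i)) * (Matrix.of fun i j : Fin m => B (f i) j).det := by
    have hrows : (A * B) = Matrix.of (fun i => ∑ j, A i j • B j) := by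
      funext i k
      simp [Matrix.mul_apply, Finset.sum_apply, smul_eq_mul]
    have h0 : (A * B).det = F (fun i => ∑ j, A i j • B j) := by
      rw [show (A * B).det = F (A * B) from rfl, hrows]
      rfl
    rw [h0, F.map_sum]
    refine Finset.sum_congr rfl fun f _ => ?_
    have := F.map_smul_univ (fun i => A i (f i)) (fun i => B (f i))
    exact this.trans (by rw [smul_eq_mul]; rfl)
  rw [h1]
  rw [← Finset.sum_subset (Finset.filter_subset (fun f => Function.Injective f) Finset.univ)
    (fun f _ hf => ?_)]
  swap
  · have hnf : ¬ Function.Injective f := by simpa using hf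
    rw [Function.not_injective_iff] at hnf
    obtain ⟨i, j, hij, hne⟩ := hnf
    have : (Matrix.of fun i j : Fin m => B (f i) j).det = 0 := by
      apply Matrix.det_zero_of_row_eq hne
      funext k
      simp [hij]
    simp [this]
  have h3 : ∑ s : {s : Finset (Fin N) // s.card = m},
      (Matrix.of fun i j : Fin m => A i (s.1.orderIsoOfFin s.2 j)).det *
      (Matrix.of fun i j : Fin m => B (s.1.orderIsoOfFin s.2 i) j).det
      = ∑ p : {s : Finset (Fin N) // s.card = m} × Equiv.Perm (Fin m),
        (((Equiv.Perm.sign p.2 : ℤ) : R) * ∏ i, A i (p.1.1.orderIsoOfFin p.1.2 (p.2 i))) *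
        (Matrix.of fun i j : Fin m => B (p.1.1.orderIsoOfFin p.1.2 i) j).det := by
    rw [Fintype.sum_prod_type]
    refine Finset.sum_congr rfl fun s _ => ?_
    have hA : (Matrix.of fun i j : Fin m => A i (s.1.orderIsoOfFin s.2 j)).det
        = ∑ σ : Equiv.Perm (Fin m),
          ((Equiv.Perm.sign σ : ℤ) : R) * ∏ i, A i (s.1.orderIsoOfFin s.2 (σ i)) := by
      rw [← Matrix.det_transpose, Matrix.det_apply']
      rfl
    rw [hA, Finset.sum_mul]
  rw [h3]
  symm
  have himg : ∀ p : {s : Finset (Fin N) // s.card = m} × Equiv.Perm (Fin m),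
      Finset.image (fun i => (p.1.1.orderIsoOfFin p.1.2 (p.2 i) : Fin N)) Finset.univ = p.1.1 := by
    intro p
    rw [show (fun i => (p.1.1.orderIsoOfFin p.1.2 (p.2 i) : Fin N))
        = (fun i => (p.1.1.orderIsoOfFin p.1.2 i : Fin N)) ∘ p.2 from rfl]
    rw [← Finset.image_image]
    rw [Finset.image_univ_equiv]
    exact image_orderIsoOfFin _ _
  refine Finset.sum_bij (fun p _ => fun i => (p.1.1.orderIsoOfFin p.1.2 (p.2 i) : Fin N))
    ?_ ?_ ?_ ?_
  · intro p _
    simp only [Finset.mem_filter, Finset.mem_univ, true_and]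
    intro i j hij
    exact p.2.injective ((p.1.1.orderIsoOfFin p.1.2).injective (Subtype.ext hij))
  · intro p hp q hq hpq
    have h11 : p.1.1 = q.1.1 := by
      rw [← himg p, ← himg q, hpq]
    have h2 : p.2 = q.2 := Equiv.ext fun i => by
      have h := congrFun hpq i
      rw [orderIsoOfFin_congr h11 p.1.2 q.1.2] at h
      exact (q.1.1.orderIsoOfFin q.1.2).injective (Subtype.ext h)
    exact Prod.ext (Subtype.ext h11) h2
  · intro f hf
    have hfi : Function.Injective f := by simpa using hf
    have hcard : (Finset.image f Finset.univ).card = m := by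
      rw [Finset.card_image_of_injective _ hfi, Finset.card_univ, Fintype.card_fin]
    refine ⟨(⟨Finset.image f Finset.univ, hcard⟩, Equiv.ofBijective
      (fun i => ((Finset.image f Finset.univ).orderIsoOfFin hcard).symm
        ⟨f i, Finset.mem_image_of_mem f (Finset.mem_univ i)⟩) ?_), Finset.mem_univ _, ?_⟩
    · rw [Fintype.bijective_iff_injective_and_card]
      refine ⟨fun i j hij => hfi ?_, rfl⟩
      have := congrArg (fun x => ((Finset.image f Finset.univ).orderIsoOfFin hcard x : Fin N)) hij
      simpa using this
    · funext i
      simp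
  · intro p _
    have hperm : (Matrix.of fun i j : Fin m =>
        B (p.1.1.orderIsoOfFin p.1.2 (p.2 i) : Fin N) j).det
        = ((Equiv.Perm.sign p.2 : ℤ) : R) *
          (Matrix.of fun i j : Fin m => B (p.1.1.orderIsoOfFin p.1.2 i : Fin N) j).det := by
      rw [show (Matrix.of fun i j : Fin m => B (p.1.1.orderIsoOfFin p.1.2 (p.2 i) : Fin N) j)
        = (Matrix.of fun i j : Fin m => B (p.1.1.orderIsoOfFin p.1.2 i : Fin N) j).submatrix
          p.2 id from rfl]
      rw [Matrix.det_permute]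
    rw [hperm]
    ring

private lemma abs_det_submatrix {K : Type*} [CommRing K] [LinearOrder K] [IsStrictOrderedRing K] {ι κ : Type*}
    [DecidableEq ι] [Fintype ι] [DecidableEq κ] [Fintype κ]
    (A : Matrix κ κ K) (e f : ι ≃ κ) : |(A.submatrix e f).det| = |A.det| := by
  have h : A.submatrix ⇑e ⇑f = ((A.submatrix f f).submatrix (e.trans f.symm) id) := by
    ext i j
    simp
  rw [h, Matrix.det_permute, Matrix.det_submatrix_equiv_self, abs_mul]
  have h2 : |((Equiv.Perm.sign (e.trans f.symm) : ℤ) : K)| = 1 := by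
    rcases Int.units_eq_one_or (Equiv.Perm.sign (e.trans f.symm)) with h' | h' <;> simp [h']
  rw [h2, one_mul]

private lemma det_eq_corner {R : Type*} [CommRing R] {ι₁ ι₂ κ : Type*}
    [DecidableEq ι₁] [Fintype ι₁] [DecidableEq ι₂] [Fintype ι₂] [DecidableEq κ] [Fintype κ]
    (N : Matrix κ κ R) (er ec : ι₁ ⊕ ι₂ ≃ κ)
    (hcol : ∀ (i : ι₁) (k : κ), N k (ec (Sum.inl i)) = if k = er (Sum.inl i) then 1 else 0) :
    (N.submatrix er ec).det
      = (Matrix.of fun i j : ι₂ => N (er (Sum.inr i)) (ec (Sum.inr j))).det := by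
  have h : N.submatrix ⇑er ⇑ec = Matrix.fromBlocks 1
      (Matrix.of fun i j => N (er (Sum.inl i)) (ec (Sum.inr j))) 0
      (Matrix.of fun i j => N (er (Sum.inr i)) (ec (Sum.inr j))) := by
    ext p q
    rcases p with i | i <;> rcases q with j | j <;>
      simp [hcol, Matrix.one_apply, er.injective.eq_iff]
  rw [h, Matrix.det_fromBlocks_zero₂₁, Matrix.det_one, one_mul]

private def castVecLin (n : ℕ) : (Fin n → ℤ) →ₗ[ℤ] (Fin n → ℚ) where
  toFun x := fun t => (x t : ℚ)
  map_add' x y := by funext t; simp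
  map_smul' c x := by
    funext t
    simp [zsmul_eq_mul]

private lemma li_rat {n k : ℕ} (w : Fin k → Fin n → ℤ) (hw : LinearIndependent ℤ w) :
    LinearIndependent ℚ (fun i => (fun t => (w i t : ℚ))) := by
  have hker : LinearMap.ker (castVecLin n) = ⊥ := by
    rw [LinearMap.ker_eq_bot]
    intro x y hxy
    funext t
    have h2 : ((x t : ℚ)) = (y t : ℚ) := congrFun hxy t
    exact_mod_cast h2
  have h1 : LinearIndependent ℤ (fun i => (castVecLin n) (w i)) := hw.map' _ hker
  exact (LinearIndependent.iff_fractionRing ℤ ℚ).mp h1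


/-- **Covolume of an orthogonal-complement lattice.**  Let `v 0, …, v (r-1) ∈ ℤ^n` be linearly
independent and `Λ = {x ∈ ℤ^n : x·v i = 0 for all i}`.  Let `D` be the largest positive integer
dividing every `r×r` minor of the matrix with columns `v i`, and `W` the Euclidean norm of the
vector of all `r×r` minors.  Then the covolume of the rank `n-r` lattice `Λ` (computed as the
square root of the Gram determinant of any ℤ-basis `z` of `Λ`) equals `W / D`. -/
theorem stmt_1 (n r : ℕ) (hr : 0 < r) (hrn : r ≤ n)
    (v : Fin r → (Fin n → ℤ))
    (hv : LinearIndependent ℤ v)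
    (minor : Finset (Fin n) → ℤ)
    (hminor : ∀ (s : Finset (Fin n)) (h : s.card = r),
      minor s = Matrix.det (Matrix.of fun i j : Fin r => v j ((s.orderIsoOfFin h i : Fin n))))
    (hminor0 : ∀ s : Finset (Fin n), s.card ≠ r → minor s = 0)
    (W : ℝ)
    (hW : W = Real.sqrt (∑ s ∈ Finset.powersetCard r (Finset.univ : Finset (Fin n)),
      ((minor s : ℝ)) ^ 2))
    (D : ℕ)
    (hD : IsGreatest {d : ℕ | 0 < d ∧ ∀ s : Finset (Fin n), (d : ℤ) ∣ minor s} D)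
    (z : Fin (n - r) → (Fin n → ℤ))
    (hzind : LinearIndependent ℤ z)
    (hzspan : ∀ x : Fin n → ℤ,
      (∀ i, ∑ t, x t * v i t = 0) ↔ x ∈ Submodule.span ℤ (Set.range z)) :
    Real.sqrt ((Matrix.det (Matrix.of fun i j : Fin (n - r) => ∑ t, z i t * z j t) : ℝ))
      = W / D := by
  classical
  have hrm : r + (n - r) = n := Nat.add_sub_cancel' hrn
  -- integral matrices
  set Vz : Matrix (Fin r) (Fin n) ℤ := Matrix.of (fun i t => v i t) with hVzdef
  set Zz : Matrix (Fin (n - r)) (Fin n) ℤ := Matrix.of (fun i t => z i t) with hZzdef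
  -- rational matrices
  set Vq : Matrix (Fin r) (Fin n) ℚ := Matrix.of (fun i t => (v i t : ℚ)) with hVqdef
  set Zq : Matrix (Fin (n - r)) (Fin n) ℚ := Matrix.of (fun i t => (z i t : ℚ)) with hZqdef
  -- orthogonality
  have horthZ : ∀ i j, ∑ t, z i t * v j t = 0 := fun i j =>
    (hzspan (z i)).mpr (Submodule.subset_span ⟨i, rfl⟩) j
  -- complement cardinality
  have hcompl : ∀ s : Finset (Fin n), s.card = r → sᶜ.card = n - r := by
    intro s hs
    rw [Finset.card_compl, hs, Fintype.card_fin]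
  have hcompl' : ∀ t : Finset (Fin n), t.card = n - r → tᶜ.card = r := by
    intro t ht
    rw [Finset.card_compl, ht, Fintype.card_fin]
    omega
  -- the complementary minors of Z, as an integral function
  set dz : Finset (Fin n) → ℤ := fun s =>
    if h : sᶜ.card = n - r then
      (Matrix.of fun i j : Fin (n - r) => z i ((sᶜ.orderIsoOfFin h j : Fin n))).det
    else 0 with hdzdef
  -- rational Gram matrices
  set GV : Matrix (Fin r) (Fin r) ℚ := Vq * Vqᵀ with hGVdef
  set GZ : Matrix (Fin (n - r)) (Fin (n - r)) ℚ := Zq * Zqᵀ with hGZdef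
  have horthQ : Vq * Zqᵀ = 0 := by
    ext i j
    have h := horthZ j i
    have h2 : ∑ t, Vq i t * Zqᵀ t j = ((∑ t, z j t * v i t : ℤ) : ℚ) := by
      push_cast
      refine Finset.sum_congr rfl fun t _ => ?_
      simp [hVqdef, hZqdef, mul_comm]
    simp only [Matrix.mul_apply, Matrix.zero_apply]
    rw [h2, h]
    norm_num
  have horthQ' : Zq * Vqᵀ = 0 := by
    have h := congrArg Matrix.transpose horthQ
    simpa [Matrix.transpose_mul] using h
  -- rational linear independence
  have hVind : LinearIndependent ℚ (fun i => Vq i) := li_rat v hv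
  have hZind : LinearIndependent ℚ (fun i => Zq i) := li_rat z hzind
  -- the combined square matrix
  set e : Fin r ⊕ Fin (n - r) ≃ Fin n := finSumFinEquiv.trans (finCongr hrm) with hedef
  set Arows : Matrix (Fin r ⊕ Fin (n - r)) (Fin n) ℚ := Matrix.fromRows Vq Zq with hArowsdef
  set A : Matrix (Fin n) (Fin n) ℚ := Arows.submatrix e.symm id with hAdef
  have hsubmul : ∀ (X : Matrix (Fin r ⊕ Fin (n - r)) (Fin n) ℚ)
      (Y : Matrix (Fin n) (Fin r ⊕ Fin (n - r)) ℚ),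
      X.submatrix e.symm id * Y.submatrix id e.symm = (X * Y).submatrix e.symm e.symm := by
    intro X Y
    have h := Matrix.submatrix_mul_equiv X Y e.symm (Equiv.refl (Fin n)) e.symm
    simpa using h
  have hAArows : Arows * Arowsᵀ = Matrix.fromBlocks GV 0 0 GZ := by
    rw [hArowsdef, Matrix.transpose_fromRows, Matrix.fromRows_mul_fromCols,
      horthQ, horthQ']
  have hAsq : A.det ^ 2 = GV.det * GZ.det := by
    have h1 : A * Aᵀ = (Matrix.fromBlocks GV 0 0 GZ).submatrix e.symm e.symm := by
      rw [hAdef, Matrix.transpose_submatrix, hsubmul, hAArows]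
    calc A.det ^ 2 = (A * Aᵀ).det := by rw [Matrix.det_mul, Matrix.det_transpose, sq]
      _ = (Matrix.fromBlocks GV 0 0 GZ).det := by rw [h1, Matrix.det_submatrix_equiv_self]
      _ = GV.det * GZ.det := Matrix.det_fromBlocks_zero₂₁ _ _ _
  have hAdet0 : A.det ≠ 0 := by
    have hdisj : Disjoint (Submodule.span ℚ (Set.range fun i => Vq i))
        (Submodule.span ℚ (Set.range fun i => Zq i)) := by
      rw [Submodule.disjoint_def]
      intro x hx1 hx2
      rw [Submodule.mem_span_range_iff_exists_fun] at hx1 hx2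
      obtain ⟨a, ha⟩ := hx1
      obtain ⟨b, hb⟩ := hx2
      have hxx : ∑ t, x t * x t = 0 := by
        have hxa : ∀ t, x t = ∑ i, a i * Vq i t := by
          intro t
          rw [← ha]
          simp [Finset.sum_apply]
        have hxb : ∀ t, x t = ∑ i, b i * Zq i t := by
          intro t
          rw [← hb]
          simp [Finset.sum_apply]
        calc ∑ t, x t * x t = ∑ t, (∑ i, a i * Vq i t) * (∑ j, b j * Zq j t) := by
              refine Finset.sum_congr rfl fun t _ => by rw [← hxa, ← hxb]
          _ = ∑ t, ∑ i, ∑ j, (a i * b j) * (Vq i t * Zq j t) := by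
              refine Finset.sum_congr rfl fun t _ => by
                rw [Finset.sum_mul_sum]
                refine Finset.sum_congr rfl fun i _ => Finset.sum_congr rfl fun j _ => by ring
          _ = ∑ i, ∑ j, (a i * b j) * (∑ t, Vq i t * Zq j t) := by
              rw [Finset.sum_comm]
              refine Finset.sum_congr rfl fun i _ => ?_
              rw [Finset.sum_comm]
              refine Finset.sum_congr rfl fun j _ => by rw [Finset.mul_sum]
          _ = 0 := by
              refine Finset.sum_eq_zero fun i _ => Finset.sum_eq_zero fun j _ => ?_
              have h0 := congrFun (congrFun horthQ i) j
              simp only [Matrix.mul_apply, Matrix.transpose_apply, Matrix.zero_apply] at h0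
              rw [h0, mul_zero]
      funext t
      have := (Finset.sum_eq_zero_iff_of_nonneg
        (fun t _ => mul_self_nonneg (x t))).mp hxx t (Finset.mem_univ t)
      exact mul_self_eq_zero.mp this
    have hsum : LinearIndependent ℚ (Sum.elim (fun i => Vq i) (fun i => Zq i)) :=
      LinearIndependent.sum_type hVind hZind hdisj
    have hrowsA : LinearIndependent ℚ (fun i => A i) :=
      hsum.comp e.symm e.symm.injective
    have hu : IsUnit A := Matrix.linearIndependent_rows_iff_isUnit.mp hrowsA
    exact ((Matrix.isUnit_iff_isUnit_det A).mp hu).ne_zero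
  have hprodne : GV.det * GZ.det ≠ 0 := by
    rw [← hAsq]
    exact pow_ne_zero 2 hAdet0
  have hGV0 : GV.det ≠ 0 := left_ne_zero_of_mul hprodne
  have hGZ0 : GZ.det ≠ 0 := right_ne_zero_of_mul hprodne
  -- inverse matrix
  set Bcols : Matrix (Fin n) (Fin r ⊕ Fin (n - r)) ℚ :=
    Matrix.fromCols (Vqᵀ * GV⁻¹) (Zqᵀ * GZ⁻¹) with hBcolsdef
  set B : Matrix (Fin n) (Fin n) ℚ := Bcols.submatrix id e.symm with hBdef
  have hABrows : Arows * Bcols = 1 := by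
    rw [hArowsdef, hBcolsdef, Matrix.fromRows_mul_fromCols,
      ← Matrix.mul_assoc, ← Matrix.mul_assoc, ← Matrix.mul_assoc, ← Matrix.mul_assoc,
      ← hGVdef, ← hGZdef, horthQ, horthQ',
      Matrix.mul_nonsing_inv _ (isUnit_iff_ne_zero.mpr hGV0),
      Matrix.mul_nonsing_inv _ (isUnit_iff_ne_zero.mpr hGZ0),
      Matrix.zero_mul, Matrix.zero_mul, Matrix.fromBlocks_one]
  have hAB : A * B = 1 := by
    rw [hAdef, hBdef, hsubmul, hABrows, Matrix.submatrix_one_equiv]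
  -- the key proportionality identity
  have key : ∀ s : Finset (Fin n), s.card = r →
      |(minor s : ℚ)| * |A.det| = |(dz s : ℚ)| * |GV.det| := by
    intro s hs
    have hsc : sᶜ.card = n - r := hcompl s hs
    set ms := s.orderIsoOfFin hs with hmsdef
    set mc := sᶜ.orderIsoOfFin hsc with hmcdef
    set C : Matrix (Fin n) (Fin n) ℚ := Matrix.of (fun t k =>
      Sum.elim (fun i => B t (e (Sum.inl i)))
        (fun i' => if t = (mc i' : Fin n) then (1:ℚ) else 0) (e.symm k)) with hCdef
    set M : Matrix (Fin n) (Fin n) ℚ := A * C with hMdef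
    have hMcol : ∀ (i : Fin r) (k : Fin n),
        M k (e (Sum.inl i)) = if k = e (Sum.inl i) then 1 else 0 := by
      intro i k
      have h1 : M k (e (Sum.inl i)) = (A * B) k (e (Sum.inl i)) := by
        simp only [hMdef, Matrix.mul_apply, hCdef, Matrix.of_apply, Equiv.symm_apply_apply,
          Sum.elim_inl]
      rw [h1, hAB, Matrix.one_apply]
    have hMcorner : ∀ (i j : Fin (n - r)),
        M (e (Sum.inr i)) (e (Sum.inr j)) = ((z i ((mc j : Fin n)) : ℚ)) := by
      intro i j
      simp only [hMdef, Matrix.mul_apply, hCdef, Matrix.of_apply, Equiv.symm_apply_apply,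
        Sum.elim_inr, mul_ite, mul_one, mul_zero]
      rw [Finset.sum_ite_eq' Finset.univ ((mc j : Fin n)) (fun u => A (e (Sum.inr i)) u)]
      simp only [Finset.mem_univ, if_true, hAdef, Matrix.submatrix_apply,
        Equiv.symm_apply_apply, id_eq, hArowsdef, Matrix.fromRows_apply_inr, hZqdef,
        Matrix.of_apply]
    have hMdet : M.det = (dz s : ℚ) := by
      have h2 := det_eq_corner M e e hMcol
      rw [Matrix.det_submatrix_equiv_self] at h2
      rw [h2]
      have h3 : (Matrix.of fun i j : Fin (n - r) => M (e (Sum.inr i)) (e (Sum.inr j)))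
          = (Int.castRingHom ℚ).mapMatrix
            (Matrix.of fun i j : Fin (n - r) => z i ((mc j : Fin n))) := by
        ext i j
        simp only [Matrix.of_apply, RingHom.mapMatrix_apply, Matrix.map_apply,
          Int.coe_castRingHom]
        exact hMcorner i j
      rw [h3, ← RingHom.map_det]
      have h4 : dz s = (Matrix.of fun i j : Fin (n - r) => z i ((mc j : Fin n))).det := by
        simp only [hdzdef]
        rw [dif_pos hsc]
      rw [h4]
      simp [Int.coe_castRingHom]
    have hCdet : |C.det| = |(minor s : ℚ)| / |GV.det| := by
      set er2 : Fin (n - r) ⊕ Fin r ≃ Fin n :=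
        (Equiv.sumCongr (mc.toEquiv.trans (Equiv.subtypeEquivRight
            (fun x => Finset.mem_compl))) ms.toEquiv).trans
          ((Equiv.sumComm _ _).trans (Equiv.sumCompl (· ∈ s))) with her2
      set ec2 : Fin (n - r) ⊕ Fin r ≃ Fin n := (Equiv.sumComm _ _).trans e with hec2
      have her2l : ∀ i' : Fin (n - r), er2 (Sum.inl i') = (mc i' : Fin n) := by
        intro i'
        simp [her2, Equiv.sumCompl_apply_inr]
      have her2r : ∀ i : Fin r, er2 (Sum.inr i) = (ms i : Fin n) := by
        intro i
        simp [her2, Equiv.sumCompl_apply_inl]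
      have hcol2 : ∀ (i' : Fin (n - r)) (t : Fin n),
          C t (ec2 (Sum.inl i')) = if t = er2 (Sum.inl i') then 1 else 0 := by
        intro i' t
        rw [her2l]
        simp [hCdef, hec2]
      have h5 := det_eq_corner C er2 ec2 hcol2
      have h6 : |C.det| = |(C.submatrix er2 ec2).det| := (abs_det_submatrix C er2 ec2).symm
      rw [h6, h5]
      have h7 : (Matrix.of fun i j : Fin r => C (er2 (Sum.inr i)) (ec2 (Sum.inr j)))
          = ((Int.castRingHom ℚ).mapMatrix
              (Matrix.of fun i j : Fin r => v j ((ms i : Fin n)))) * GV⁻¹ := by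
        ext i j
        simp only [Matrix.of_apply]
        rw [show er2 (Sum.inr i) = (ms i : Fin n) from her2r i]
        simp only [hCdef, Matrix.of_apply, hec2, Equiv.trans_apply, Equiv.sumComm_apply,
          Sum.swap_inr, Equiv.symm_apply_apply, Sum.elim_inl, hBdef, Matrix.submatrix_apply,
          id_eq, Equiv.symm_apply_apply, hBcolsdef, Matrix.fromCols_apply_inl,
          Matrix.mul_apply, RingHom.mapMatrix_apply, Matrix.map_apply, Int.coe_castRingHom,
          Matrix.transpose_apply, hVqdef]
      rw [h7, Matrix.det_mul, ← RingHom.map_det, ← hminor s hs, abs_mul,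
        Matrix.det_nonsing_inv, Ring.inverse_eq_inv', abs_inv]
      simp only [Int.coe_castRingHom]
      rw [div_eq_mul_inv]
    have h8 : |M.det| = |A.det| * |C.det| := by rw [hMdef, Matrix.det_mul, abs_mul]
    rw [hMdet, hCdet] at h8
    have hGVne : |GV.det| ≠ 0 := abs_ne_zero.mpr hGV0
    field_simp at h8
    linarith [h8]
  -- Cauchy-Binet for V and Z over the integers
  have hPn : (Vz * Vzᵀ).det = ∑ s : {s : Finset (Fin n) // s.card = r}, (minor s.1) ^ 2 := by
    rw [cauchy_binet Vz Vzᵀ]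
    refine Finset.sum_congr rfl fun s _ => ?_
    have hT : (Matrix.of fun i j : Fin r => Vz i (s.1.orderIsoOfFin s.2 j))
        = (Matrix.of fun i j : Fin r => Vzᵀ (s.1.orderIsoOfFin s.2 i) j)ᵀ := rfl
    have h2 : (Matrix.of fun i j : Fin r => Vzᵀ (s.1.orderIsoOfFin s.2 i) j).det
        = minor s.1 := (hminor s.1 s.2).symm
    rw [hT, Matrix.det_transpose, h2, sq]
  have hGn : (Zz * Zzᵀ).det = ∑ s : {s : Finset (Fin n) // s.card = r}, (dz s.1) ^ 2 := by
    rw [cauchy_binet Zz Zzᵀ]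
    refine Fintype.sum_equiv
      ⟨fun t => ⟨t.1ᶜ, hcompl' t.1 t.2⟩, fun s => ⟨s.1ᶜ, hcompl s.1 s.2⟩,
        fun t => Subtype.ext (compl_compl _), fun s => Subtype.ext (compl_compl _)⟩ _ _ ?_
    intro t
    simp only [Equiv.coe_fn_mk]
    have hcc : (t.1ᶜ)ᶜ.card = n - r := by rw [compl_compl]; exact t.2
    have hdzt : dz t.1ᶜ
        = (Matrix.of fun i j : Fin (n - r) => Zz i ((t.1.orderIsoOfFin t.2 j : Fin n))).det := by
      simp only [hdzdef]
      rw [dif_pos hcc]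
      congr 1
      funext i j
      simp only [Matrix.of_apply, hZzdef]
      congr 1
      exact orderIsoOfFin_congr (compl_compl t.1) hcc t.2 j
    have hT : (Matrix.of fun i j : Fin (n - r) => Zzᵀ ((t.1.orderIsoOfFin t.2) i : Fin n) j)
        = (Matrix.of fun i j : Fin (n - r) => Zz i ((t.1.orderIsoOfFin t.2) j : Fin n))ᵀ := rfl
    rw [hT, Matrix.det_transpose, ← hdzt, sq]
  set P : ℤ := ∑ s : {s : Finset (Fin n) // s.card = r}, (minor s.1) ^ 2 with hPdef
  set G : ℤ := ∑ s : {s : Finset (Fin n) // s.card = r}, (dz s.1) ^ 2 with hGdef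
  have hGVP : GV.det = (P : ℚ) := by
    have hmap : GV = (Int.castRingHom ℚ).mapMatrix (Vz * Vzᵀ) := by
      ext i j
      simp only [hGVdef, Matrix.mul_apply, Matrix.map_apply, Matrix.transpose_apply,
        RingHom.mapMatrix_apply, hVqdef, hVzdef, Matrix.of_apply, Int.coe_castRingHom]
      push_cast
      rfl
    rw [hmap, ← RingHom.map_det, hPn]
    simp [Int.coe_castRingHom]
  have hGZG : GZ.det = (G : ℚ) := by
    have hmap : GZ = (Int.castRingHom ℚ).mapMatrix (Zz * Zzᵀ) := by
      ext i j
      simp only [hGZdef, Matrix.mul_apply, Matrix.map_apply, Matrix.transpose_apply,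
        RingHom.mapMatrix_apply, hZqdef, hZzdef, Matrix.of_apply, Int.coe_castRingHom]
      push_cast
      rfl
    rw [hmap, ← RingHom.map_det, hGn]
    simp [Int.coe_castRingHom]
  have hGoalG : (Matrix.of fun i j : Fin (n - r) => ∑ t, z i t * z j t).det = G := by
    have h1 : (Matrix.of fun i j : Fin (n - r) => ∑ t, z i t * z j t) = Zz * Zzᵀ := by
      ext i j
      simp [Matrix.mul_apply, hZzdef]
    rw [h1, hGn]
  have hP0 : P ≠ 0 := by
    intro h
    apply hGV0
    rw [hGVP, h]
    norm_num
  have hG0 : G ≠ 0 := by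
    intro h
    apply hGZ0
    rw [hGZG, h]
    norm_num
  -- squared key identity over ℤ
  have key2 : ∀ s : Finset (Fin n), s.card = r →
      (minor s) ^ 2 * G = (dz s) ^ 2 * P := by
    intro s hs
    have h := key s hs
    have hsq := congrArg (fun x : ℚ => x ^ 2) h
    simp only [mul_pow, sq_abs] at hsq
    rw [hAsq, hGVP, hGZG] at hsq
    have hPne : (P : ℚ) ≠ 0 := Int.cast_ne_zero.mpr hP0
    have h2 : (minor s : ℚ) ^ 2 * (G : ℚ) = (dz s : ℚ) ^ 2 * (P : ℚ) := by
      apply mul_right_cancel₀ hPne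
      linear_combination hsq
    exact_mod_cast h2
  -- gcd of the minors is D
  have hgcdD : (Finset.univ : Finset {s : Finset (Fin n) // s.card = r}).gcd
      (fun s => (minor s.1).natAbs) = D := by
    have hDdvd : ∀ s : {s : Finset (Fin n) // s.card = r}, D ∣ (minor s.1).natAbs := by
      intro s
      have h := hD.1.2 s.1
      rwa [Int.natCast_dvd] at h
    have hDg : D ∣ (Finset.univ : Finset {s : Finset (Fin n) // s.card = r}).gcd
        (fun s => (minor s.1).natAbs) := Finset.dvd_gcd fun s _ => hDdvd s
    have hg0pos : 0 < (Finset.univ : Finset {s : Finset (Fin n) // s.card = r}).gcd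
        (fun s => (minor s.1).natAbs) := by
      rw [Nat.pos_iff_ne_zero]
      intro h0
      apply hP0
      rw [hPdef]
      refine Finset.sum_eq_zero fun s _ => ?_
      rw [Finset.gcd_eq_zero_iff] at h0
      have h1 := h0 s (Finset.mem_univ s)
      rw [Int.natAbs_eq_zero.mp h1]
      ring
    have hg0mem : (Finset.univ : Finset {s : Finset (Fin n) // s.card = r}).gcd
        (fun s => (minor s.1).natAbs) ∈ {d : ℕ | 0 < d ∧ ∀ s : Finset (Fin n), (d : ℤ) ∣ minor s} := by
      refine ⟨hg0pos, fun s => ?_⟩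
      by_cases hsr : s.card = r
      · have h1 := Finset.gcd_dvd
          (f := fun t : {s : Finset (Fin n) // s.card = r} => (minor t.1).natAbs)
          (Finset.mem_univ (⟨s, hsr⟩ : {s : Finset (Fin n) // s.card = r}))
        exact Int.natCast_dvd.mpr h1
      · rw [hminor0 s hsr]
        exact dvd_zero _
    exact le_antisymm (hD.2 hg0mem) (Nat.le_of_dvd hg0pos hDg)
  -- gcd of the complementary z-minors is 1
  have hgcd1 : (Finset.univ : Finset {s : Finset (Fin n) // s.card = r}).gcd
      (fun s => (dz s.1).natAbs) = 1 := by
    by_contra hne1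
    obtain ⟨p, hp, hpdvd⟩ := Nat.exists_prime_and_dvd hne1
    haveI : Fact p.Prime := ⟨hp⟩
    haveI : NeZero p := ⟨hp.pos.ne'⟩
    have hpall : ∀ (t : Finset (Fin n)) (ht : t.card = n - r),
        (p : ℤ) ∣ (Matrix.of fun i j : Fin (n - r) => z i ((t.orderIsoOfFin ht j : Fin n))).det := by
      intro t ht
      have htc : tᶜ.card = r := hcompl' t ht
      have hcc : (tᶜ)ᶜ.card = n - r := by rw [compl_compl]; exact ht
      have h1 : dz tᶜ
          = (Matrix.of fun i j : Fin (n - r) => z i ((t.orderIsoOfFin ht j : Fin n))).det := by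
        simp only [hdzdef]
        rw [dif_pos hcc]
        congr 1
        funext i j
        simp only [Matrix.of_apply]
        congr 1
        exact orderIsoOfFin_congr (compl_compl t) hcc ht j
      rw [← h1]
      have h2 : p ∣ (dz tᶜ).natAbs :=
        dvd_trans hpdvd (Finset.gcd_dvd (Finset.mem_univ
          (⟨tᶜ, htc⟩ : {s : Finset (Fin n) // s.card = r})))
      exact Int.natCast_dvd.mpr h2
    set Zp : Matrix (Fin (n - r)) (Fin n) (ZMod p) :=
      Matrix.of (fun i t => ((z i t : ℤ) : ZMod p)) with hZpdef
    have hdep : ¬ LinearIndependent (ZMod p) (fun i => Zp i) := by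
      intro hind
      have hinj : Function.Injective Zp.vecMul := Matrix.vecMul_injective_iff.mpr hind
      obtain ⟨gl, hgl⟩ := LinearMap.exists_leftInverse_of_injective Zp.vecMulLinear
        (by rw [LinearMap.ker_eq_bot]; exact hinj)
      set Nm : Matrix (Fin n) (Fin (n - r)) (ZMod p) :=
        Matrix.toLinearMapRight'.symm gl with hNm
      have hvm : ∀ x : Fin (n - r) → ZMod p, (x ᵥ* Zp) ᵥ* Nm = x := by
        intro x
        have h3 : (Matrix.toLinearMapRight' Nm) = gl := by
          rw [hNm]
          exact LinearEquiv.apply_symm_apply _ _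
        have h4 : (x ᵥ* Zp) ᵥ* Nm = gl (Zp.vecMulLinear x) := by
          rw [← h3]
          rfl
        rw [h4]
        exact LinearMap.congr_fun hgl x
      have hZN : Zp * Nm = 1 := by
        ext i j
        have h5 := congrFun (hvm (Pi.single i 1)) j
        rw [Matrix.vecMul_vecMul, Matrix.single_one_vecMul] at h5
        change (Zp * Nm) i j = _ at h5
        rw [h5, Matrix.one_apply, Pi.single_apply]
        simp [eq_comm]
      have hcb := cauchy_binet Zp Nm
      rw [hZN, Matrix.det_one] at hcb
      have hzero : (1 : ZMod p) = 0 := by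
        rw [hcb]
        refine Finset.sum_eq_zero fun t _ => ?_
        have h5 : (Matrix.of fun i j : Fin (n - r) => Zp i (t.1.orderIsoOfFin t.2 j))
            = (Int.castRingHom (ZMod p)).mapMatrix
              (Matrix.of fun i j : Fin (n - r) => z i ((t.1.orderIsoOfFin t.2 j : Fin n))) := by
          ext i j
          simp [hZpdef, Int.coe_castRingHom]
        rw [h5, ← RingHom.map_det]
        have h6 := (ZMod.intCast_zmod_eq_zero_iff_dvd
          ((Matrix.of fun i j : Fin (n - r) => z i ((t.1.orderIsoOfFin t.2 j : Fin n))).det) p).mpr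
          (hpall t.1 t.2)
        simp only [Int.coe_castRingHom]
        rw [h6, zero_mul]
      exact one_ne_zero hzero
    rw [Fintype.not_linearIndependent_iff] at hdep
    obtain ⟨g, hgsum, i₀, hgi₀⟩ := hdep
    set a : Fin (n - r) → ℤ := fun i => ((g i).val : ℤ) with hadef
    have ha : ∀ i, ((a i : ZMod p)) = g i := by
      intro i
      rw [hadef]
      push_cast
      exact ZMod.natCast_rightInverse (g i)
    set y : Fin n → ℤ := fun t => ∑ i, a i * z i t with hydef
    have hydvd : ∀ t, (p : ℤ) ∣ y t := by
      intro t
      rw [← ZMod.intCast_zmod_eq_zero_iff_dvd]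
      have h6 := congrFun hgsum t
      simp only [Finset.sum_apply, Pi.smul_apply, smul_eq_mul, Pi.zero_apply] at h6
      rw [hydef]
      push_cast
      calc (∑ i, (a i : ZMod p) * ((z i t : ℤ) : ZMod p)) = ∑ i, g i * Zp i t := by
            refine Finset.sum_congr rfl fun i _ => ?_
            rw [ha i]
            rfl
        _ = 0 := h6
    set x : Fin n → ℤ := fun t => y t / p with hxdef
    have hx : ∀ t, (p : ℤ) * x t = y t := fun t => Int.mul_ediv_cancel' (hydvd t)
    have hpne : (p : ℤ) ≠ 0 := by exact_mod_cast hp.pos.ne'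
    have hxv : ∀ j, ∑ t, x t * v j t = 0 := by
      intro j
      apply mul_left_cancel₀ hpne
      rw [mul_zero, Finset.mul_sum]
      calc ∑ t, (p : ℤ) * (x t * v j t) = ∑ t, y t * v j t := by
            refine Finset.sum_congr rfl fun t _ => by rw [← hx t]; ring
        _ = ∑ i, a i * (∑ t, z i t * v j t) := by
            simp only [hydef, Finset.sum_mul]
            rw [Finset.sum_comm]
            refine Finset.sum_congr rfl fun i _ => ?_
            rw [Finset.mul_sum]
            refine Finset.sum_congr rfl fun t _ => by ring
        _ = 0 := Finset.sum_eq_zero fun i _ => by rw [horthZ i j, mul_zero]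
    have hxmem := (hzspan x).mp hxv
    rw [Submodule.mem_span_range_iff_exists_fun] at hxmem
    obtain ⟨c, hc⟩ := hxmem
    have hzero2 : (∑ i, (a i - (p : ℤ) * c i) • z i) = 0 := by
      funext t
      simp only [Finset.sum_apply, Pi.smul_apply, smul_eq_mul, Pi.zero_apply, sub_mul]
      rw [Finset.sum_sub_distrib, sub_eq_zero]
      calc ∑ i, a i * z i t = y t := by rw [hydef]
        _ = (p : ℤ) * x t := (hx t).symm
        _ = (p : ℤ) * ∑ i, c i * z i t := by
            rw [← hc]
            simp [Finset.sum_apply]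
        _ = ∑ i, (p : ℤ) * c i * z i t := by
            rw [Finset.mul_sum]
            exact Finset.sum_congr rfl fun i _ => by ring
    have hvanish := Fintype.linearIndependent_iff.mp hzind
      (fun i => a i - (p : ℤ) * c i) hzero2
    have hpa : (p : ℤ) ∣ a i₀ := ⟨c i₀, sub_eq_zero.mp (hvanish i₀)⟩
    apply hgi₀
    rw [← ha i₀]
    exact (ZMod.intCast_zmod_eq_zero_iff_dvd _ p).mpr hpa
  -- proportionality with constant D
  have hprop : ∀ s : Finset (Fin n), s.card = r →
      (minor s).natAbs = D * (dz s).natAbs := by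
    have habs : ∀ s t : {s : Finset (Fin n) // s.card = r},
        (minor s.1).natAbs * (dz t.1).natAbs = (minor t.1).natAbs * (dz s.1).natAbs := by
      intro s t
      have h1 := key2 s.1 s.2
      have h2 := key2 t.1 t.2
      have h1n : (minor s.1).natAbs ^ 2 * G.natAbs = (dz s.1).natAbs ^ 2 * P.natAbs := by
        have h := congrArg Int.natAbs h1
        simpa [Int.natAbs_mul, Int.natAbs_pow] using h
      have h2n : (minor t.1).natAbs ^ 2 * G.natAbs = (dz t.1).natAbs ^ 2 * P.natAbs := by
        have h := congrArg Int.natAbs h2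
        simpa [Int.natAbs_mul, Int.natAbs_pow] using h
      have hGnn : G.natAbs ≠ 0 := fun h => hG0 (Int.natAbs_eq_zero.mp h)
      have h3 : ((minor s.1).natAbs * (dz t.1).natAbs) ^ 2 * G.natAbs
          = ((minor t.1).natAbs * (dz s.1).natAbs) ^ 2 * G.natAbs := by
        calc ((minor s.1).natAbs * (dz t.1).natAbs) ^ 2 * G.natAbs
            = ((minor s.1).natAbs ^ 2 * G.natAbs) * (dz t.1).natAbs ^ 2 := by ring
          _ = ((dz s.1).natAbs ^ 2 * P.natAbs) * (dz t.1).natAbs ^ 2 := by rw [h1n]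
          _ = ((dz t.1).natAbs ^ 2 * P.natAbs) * (dz s.1).natAbs ^ 2 := by ring
          _ = ((minor t.1).natAbs ^ 2 * G.natAbs) * (dz s.1).natAbs ^ 2 := by rw [h2n]
          _ = ((minor t.1).natAbs * (dz s.1).natAbs) ^ 2 * G.natAbs := by ring
      have h4 := Nat.eq_of_mul_eq_mul_right (Nat.pos_of_ne_zero hGnn) h3
      exact Nat.pow_left_injective (by norm_num) h4
    intro s hs
    calc (minor s).natAbs
        = (minor s).natAbs * (Finset.univ : Finset {s : Finset (Fin n) // s.card = r}).gcd
          (fun t => (dz t.1).natAbs) := by rw [hgcd1, mul_one]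
      _ = (Finset.univ : Finset {s : Finset (Fin n) // s.card = r}).gcd
          (fun t => (minor s).natAbs * (dz t.1).natAbs) := by
            rw [Finset.gcd_mul_left, normalize_eq]
      _ = (Finset.univ : Finset {s : Finset (Fin n) // s.card = r}).gcd
          (fun t => (dz s).natAbs * (minor t.1).natAbs) := by
            refine Finset.gcd_congr rfl fun t _ => ?_
            rw [habs ⟨s, hs⟩ t]
            ring
      _ = (dz s).natAbs * (Finset.univ : Finset {s : Finset (Fin n) // s.card = r}).gcd
          (fun t => (minor t.1).natAbs) := by rw [Finset.gcd_mul_left, normalize_eq]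
      _ = D * (dz s).natAbs := by rw [hgcdD, mul_comm]
  -- P = D^2 * G
  have hPDG : P = (D : ℤ) ^ 2 * G := by
    rw [hPdef, hGdef, Finset.mul_sum]
    refine Finset.sum_congr rfl fun s _ => ?_
    have h1 := hprop s.1 s.2
    have h2 : ((minor s.1).natAbs : ℤ) = (D : ℤ) * ((dz s.1).natAbs : ℤ) := by exact_mod_cast h1
    have h3 : (minor s.1) ^ 2 = ((minor s.1).natAbs : ℤ) ^ 2 := (Int.natAbs_sq _).symm
    have h4 : (dz s.1) ^ 2 = ((dz s.1).natAbs : ℤ) ^ 2 := (Int.natAbs_sq _).symm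
    rw [h3, h4, h2]
    ring
  -- final real computation
  have hDpos : 0 < D := hD.1.1
  have hDR : (0 : ℝ) < (D : ℝ) := by exact_mod_cast hDpos
  have hsumP : ∑ s ∈ Finset.powersetCard r (Finset.univ : Finset (Fin n)),
      ((minor s : ℝ)) ^ 2 = ((P : ℤ) : ℝ) := by
    rw [Finset.sum_subtype (Finset.powersetCard r Finset.univ)
      (fun s => Finset.mem_powersetCard_univ) (fun s => ((minor s : ℝ)) ^ 2)]
    rw [hPdef]
    push_cast
    rfl
  have hGoalR : (Matrix.of fun i j : Fin (n - r) =>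
      ∑ t : Fin n, ((z i t : ℝ)) * ((z j t : ℝ))).det = ((G : ℤ) : ℝ) := by
    have hmapR : (Matrix.of fun i j : Fin (n - r) => ∑ t : Fin n, ((z i t : ℝ)) * ((z j t : ℝ)))
        = (Int.castRingHom ℝ).mapMatrix
          (Matrix.of fun i j : Fin (n - r) => ∑ t : Fin n, z i t * z j t) := by
      ext i j
      simp only [Matrix.of_apply, RingHom.mapMatrix_apply, Matrix.map_apply,
        Int.coe_castRingHom]
      push_cast
      rfl
    rw [hmapR, ← RingHom.map_det, hGoalG]
    simp [Int.coe_castRingHom]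
  rw [hW, hsumP, hGoalR]
  have hfinal : ((P : ℤ) : ℝ) = ((D : ℝ)) ^ 2 * ((G : ℤ) : ℝ) := by
    rw [hPDG]
    push_cast
    ring
  rw [hfinal, Real.sqrt_mul (sq_nonneg ((D : ℝ))) _, Real.sqrt_sq hDR.le]
  field_simp
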